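/- Let n ≥ 1, F ≥ 1, L ≥ 0, L' ≥ 1 be integers. Let g be a family of polynomials in ℂ[w₁,…,wₙ,v₁,…,vₙ], indexed by (F−1)-tuples (γ₂,…,γ_F) ∈ {1,…,n}^{F−1}, which is totally antisymmetric in its indices, with each member bihomogeneous of bidegree (L, L'−1), and which is trace-free: ∑_{β=1}^n ∂_{v_β} g(β, γ₃, …, γ_F) = 0 for all (γ₃,…,γ_F) (this condition is vacuous if F = 1). Define the antisymmetrized family h indexed by F-tuples by h(γ₁,…,γ_F) = ∑_{k=1}^F (−1)^{k+1} · v_{γ_k} · g(γ₁,…,γ̂_k,…,γ_F), where γ̂_k means the index γ_k is omitted. Then h is totally antisymmetric, each member is bihomogeneous of bidegree (L, L'), and its trace satisfies ∑_{β=1}^n ∂_{v_β} h(β, γ₂, …, γ_F) = (n + L' − F) · g(γ₂,…,γ_F) for all (γ₂,…,γ_F). (This is the computation ∂²Φ₊/∂χ^β∂w̄^β = (n + L' − F)·Φ₊^{(2)} in Appendix B of the paper, stated without Grassmann variables.) -/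

import Mathlib

open MvPolynomial

noncomputable section

/-- Weight function giving the degree in the `w`-variables (indexed by `Sum.inl`). -/
def wWt (n : ℕ) : (Fin n ⊕ Fin n) → ℕ := Sum.elim (fun _ => 1) (fun _ => 0)

/-- Weight function giving the degree in the `v`-variables (indexed by `Sum.inr`). -/
def vWt (n : ℕ) : (Fin n ⊕ Fin n) → ℕ := Sum.elim (fun _ => 0) (fun _ => 1)

/-- A family of polynomials indexed by tuples is totally antisymmetric if permuting the
index tuple multiplies the value by the sign of the permutation. -/
def AntisymFam (n m : ℕ)
    (f : (Fin m → Fin n) → MvPolynomial (Fin n ⊕ Fin n) ℂ) : Prop :=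
  ∀ (σ : Equiv.Perm (Fin m)) (γ : Fin m → Fin n),
    f (γ ∘ σ) = (Equiv.Perm.sign σ : ℤ) • f γ

/-- A family is trace-free if the contraction `∑_β ∂_{v_β} f(… β …)` over any one of its
index slots vanishes (for a totally antisymmetric family this is equivalent to the
vanishing of the contraction over the first slot; it is vacuous if `m = 0`). -/
def TraceFreeFam (n m : ℕ)
    (f : (Fin m → Fin n) → MvPolynomial (Fin n ⊕ Fin n) ℂ) : Prop :=
  ∀ (γ : Fin m → Fin n) (i : Fin m),
    ∑ β : Fin n, pderiv (Sum.inr β) (f (Function.update γ i β)) = 0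

/-- The antisymmetrized family `h(γ₁,…,γ_F) = ∑_k (−1)^{k+1} v_{γ_k} g(γ₁,…,γ̂_k,…,γ_F)`
(the analogue of multiplication by `w̄^α χ^α`). -/
def vWedge (n m : ℕ) (g : (Fin m → Fin n) → MvPolynomial (Fin n ⊕ Fin n) ℂ) :
    (Fin (m + 1) → Fin n) → MvPolynomial (Fin n ⊕ Fin n) ℂ :=
  fun γ => ∑ k : Fin (m + 1),
    (-1 : ℤ) ^ (k : ℕ) • (MvPolynomial.X (Sum.inr (γ k)) * g (γ ∘ k.succAbove))

lemma zsmul_poly {σ : Type*} (z : ℤ) (p : MvPolynomial σ ℂ) : z • p = C (z : ℂ) * p := by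
  rw [C_mul', Int.cast_smul_eq_zsmul]

lemma smul_homog {σ : Type*} {M : Type*} [AddCommMonoid M] {w : σ → M} {p : MvPolynomial σ ℂ}
    {m : M} (z : ℤ) (h : p.IsWeightedHomogeneous w m) :
    (z • p).IsWeightedHomogeneous w m := by
  intro d hd
  apply h
  intro h0
  rw [coeff_smul, h0, smul_zero] at hd
  exact hd rfl

lemma weight_vWt (n : ℕ) (d : (Fin n ⊕ Fin n) →₀ ℕ) :
    Finsupp.weight (vWt n) d = ∑ β : Fin n, d (Sum.inr β) := by
  rw [Finsupp.weight_apply, Finsupp.sum_fintype _ _ (by intro i; simp)]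
  rw [Fintype.sum_sum_type]
  simp [vWt]

lemma euler_mono (n : ℕ) (d : (Fin n ⊕ Fin n) →₀ ℕ) (c : ℂ) (β : Fin n) :
    X (Sum.inr β) * pderiv (Sum.inr β) (monomial d c) = (d (Sum.inr β)) • monomial d c := by
  rw [pderiv_monomial]
  rcases Nat.eq_zero_or_pos (d (Sum.inr β)) with h | h
  · simp [h]
  · have hle : Finsupp.single (Sum.inr β : Fin n ⊕ Fin n) 1 ≤ d := by
      rw [Finsupp.single_le_iff]; exact h
    calc X (Sum.inr β) * (monomial (d - Finsupp.single (Sum.inr β) 1)) (c * (d (Sum.inr β) : ℂ))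
        = monomial (Finsupp.single (Sum.inr β) 1 + (d - Finsupp.single (Sum.inr β) 1))
            (c * (d (Sum.inr β) : ℂ)) := by
          rw [monomial_single_add, pow_one]
      _ = monomial d (c * (d (Sum.inr β) : ℂ)) := by
          rw [add_tsub_cancel_of_le hle]
      _ = (d (Sum.inr β)) • monomial d c := by
          rw [smul_monomial, nsmul_eq_mul, mul_comm]

lemma euler (n m : ℕ) (p : MvPolynomial (Fin n ⊕ Fin n) ℂ)
    (hp : p.IsWeightedHomogeneous (vWt n) m) :
    ∑ β : Fin n, X (Sum.inr β) * pderiv (Sum.inr β) p = m • p := by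
  calc ∑ β : Fin n, X (Sum.inr β) * pderiv (Sum.inr β) p
      = ∑ β : Fin n, ∑ d ∈ p.support, X (Sum.inr β) * pderiv (Sum.inr β)
          (monomial d (coeff d p)) := by
        refine Finset.sum_congr rfl fun β _ => ?_
        conv_lhs => rw [p.as_sum]
        rw [map_sum, Finset.mul_sum]
    _ = ∑ d ∈ p.support, (∑ β : Fin n, d (Sum.inr β)) • monomial d (coeff d p) := by
        rw [Finset.sum_comm]
        refine Finset.sum_congr rfl fun d _ => ?_
        simp_rw [euler_mono]
        rw [← Finset.sum_smul]
    _ = ∑ d ∈ p.support, m • monomial d (coeff d p) := by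
        refine Finset.sum_congr rfl fun d hd => ?_
        rw [← weight_vWt n d, hp (mem_support_iff.mp hd)]
    _ = m • p := by rw [← Finset.smul_sum, ← p.as_sum]

lemma swap_succAbove_castSucc {m : ℕ} (i j : Fin m) :
    Equiv.swap i.castSucc i.succ ((i.castSucc).succAbove j) = (i.succ).succAbove j := by
  rcases lt_trichotomy j i with h | rfl | h
  · rw [Fin.succAbove_of_castSucc_lt _ _ (by rwa [Fin.castSucc_lt_castSucc_iff]),
      Fin.succAbove_of_castSucc_lt _ _ (by rw [Fin.castSucc_lt_succ_iff]; exact h.le),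
      Equiv.swap_apply_of_ne_of_ne (by simpa using h.ne)
        (by exact ne_of_lt ((Fin.castSucc_lt_castSucc_iff.mpr h).trans (Fin.castSucc_lt_succ : i.castSucc < i.succ)))]
  · rw [Fin.succAbove_of_le_castSucc _ _ le_rfl, Equiv.swap_apply_right,
      Fin.succAbove_of_castSucc_lt _ _ (Fin.castSucc_lt_succ : j.castSucc < j.succ)]
  · rw [Fin.succAbove_of_le_castSucc _ _ (by rw [Fin.castSucc_le_castSucc_iff]; exact h.le),
      Fin.succAbove_of_le_castSucc _ _ (by rw [Fin.succ_le_castSucc_iff]; exact h),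
      Equiv.swap_apply_of_ne_of_ne
        (by exact ne_of_gt ((Fin.castSucc_lt_succ : i.castSucc < i.succ).trans (Fin.succ_lt_succ_iff.mpr h)))
        (by simpa [Fin.succ_inj] using h.ne')]

lemma swap_succAbove_succ {m : ℕ} (i j : Fin m) :
    Equiv.swap i.castSucc i.succ ((i.succ).succAbove j) = (i.castSucc).succAbove j := by
  rw [← swap_succAbove_castSucc i j, Equiv.swap_apply_self]

lemma key_tuple {n m : ℕ} (γ' : Fin (m+1) → Fin n) (β : Fin n) (j : Fin (m+1)) :
    (Fin.cons β γ') ∘ (j.succ).succAbove = Function.update (γ' ∘ ⇑j.cycleRange.symm) 0 β := by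
  funext i
  induction i using Fin.cases with
  | zero => simp
  | succ i' =>
    simp only [Function.comp_apply, Fin.succ_succAbove_succ, Fin.cons_succ,
      Function.update_of_ne (Fin.succ_ne_zero i'), Fin.cycleRange_symm_succ]

lemma vWedge_swap (n m : ℕ) (g : (Fin m → Fin n) → MvPolynomial (Fin n ⊕ Fin n) ℂ)
    (hga : AntisymFam n m g) (i : Fin m) (γ : Fin (m+1) → Fin n) :
    vWedge n m g (γ ∘ Equiv.swap i.castSucc i.succ) = - vWedge n m g γ := by
  have main : ∀ k : Fin (m+1),
      (-1:ℤ)^(k:ℕ) • (X (Sum.inr ((γ ∘ Equiv.swap i.castSucc i.succ) k)) *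
        g ((γ ∘ Equiv.swap i.castSucc i.succ) ∘ k.succAbove))
      = -((-1:ℤ)^((Equiv.swap i.castSucc i.succ k : Fin (m+1)):ℕ) •
          (X (Sum.inr (γ (Equiv.swap i.castSucc i.succ k))) *
            g (γ ∘ (Equiv.swap i.castSucc i.succ k).succAbove))) := by
    intro k
    by_cases h1 : k = i.castSucc
    · subst h1
      have hc : (γ ∘ ⇑(Equiv.swap i.castSucc i.succ)) ∘ (i.castSucc).succAbove
          = γ ∘ (i.succ).succAbove := by
        funext j; simp only [Function.comp_apply, swap_succAbove_castSucc]
      rw [Function.comp_apply, Equiv.swap_apply_left, hc, Fin.val_succ, pow_succ,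
        Fin.coe_castSucc, mul_comm, mul_smul]
      simp
    · by_cases h2 : k = i.succ
      · subst h2
        have hc : (γ ∘ ⇑(Equiv.swap i.castSucc i.succ)) ∘ (i.succ).succAbove
            = γ ∘ (i.castSucc).succAbove := by
          funext j; simp only [Function.comp_apply, swap_succAbove_succ]
        rw [Function.comp_apply, Equiv.swap_apply_right, hc, Fin.val_succ, pow_succ,
          Fin.coe_castSucc, mul_comm, mul_smul]
        simp
      · obtain ⟨a, ha⟩ := Fin.exists_succAbove_eq (Ne.symm h1)
        obtain ⟨b, hb⟩ := Fin.exists_succAbove_eq (Ne.symm h2)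
        have hab : a ≠ b := by
          intro h; rw [h, hb] at ha
          exact (Fin.castSucc_lt_succ : i.castSucc < i.succ).ne' ha
        have hc : (γ ∘ ⇑(Equiv.swap i.castSucc i.succ)) ∘ k.succAbove
            = (γ ∘ k.succAbove) ∘ ⇑(Equiv.swap a b) := by
          funext j
          simp only [Function.comp_apply]
          congr 1
          rcases eq_or_ne j a with rfl | hja
          · rw [ha, Equiv.swap_apply_left, Equiv.swap_apply_left, hb]
          · rcases eq_or_ne j b with rfl | hjb
            · rw [hb, Equiv.swap_apply_right, Equiv.swap_apply_right, ha]
            · rw [Equiv.swap_apply_of_ne_of_ne hja hjb,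
                Equiv.swap_apply_of_ne_of_ne
                  (fun h => hja (Fin.succAbove_right_injective (h.trans ha.symm)))
                  (fun h => hjb (Fin.succAbove_right_injective (h.trans hb.symm)))]
        rw [Function.comp_apply, Equiv.swap_apply_of_ne_of_ne h1 h2, hc,
          hga (Equiv.swap a b) (γ ∘ k.succAbove), Equiv.Perm.sign_swap hab]
        simp
  unfold vWedge
  calc ∑ k : Fin (m+1), (-1:ℤ)^(k:ℕ) • (X (Sum.inr ((γ ∘ Equiv.swap i.castSucc i.succ) k)) *
        g ((γ ∘ Equiv.swap i.castSucc i.succ) ∘ k.succAbove))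
      = ∑ k : Fin (m+1), -((-1:ℤ)^((Equiv.swap i.castSucc i.succ k : Fin (m+1)):ℕ) •
          (X (Sum.inr (γ (Equiv.swap i.castSucc i.succ k))) *
            g (γ ∘ (Equiv.swap i.castSucc i.succ k).succAbove))) :=
        Finset.sum_congr rfl fun k _ => main k
    _ = - ∑ k : Fin (m+1), (-1:ℤ)^(k:ℕ) • (X (Sum.inr (γ k)) * g (γ ∘ k.succAbove)) := by
        rw [Finset.sum_neg_distrib]
        congr 1
        exact Equiv.sum_comp (Equiv.swap i.castSucc i.succ)
          (fun k => (-1:ℤ)^(k:ℕ) • (X (Sum.inr (γ k)) * g (γ ∘ k.succAbove)))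
    _ = - vWedge n m g γ := rfl


lemma zero_term (n F₀ L' : ℕ)
    (g : (Fin F₀ → Fin n) → MvPolynomial (Fin n ⊕ Fin n) ℂ)
    (hgh' : ∀ γ, (g γ).IsWeightedHomogeneous (vWt n) (L' - 1)) (γ' : Fin F₀ → Fin n) :
    ∑ β : Fin n, pderiv (Sum.inr β)
        ((X (Sum.inr ((Fin.cons β γ' : Fin (F₀+1) → Fin n) 0)) : MvPolynomial (Fin n ⊕ Fin n) ℂ) *
          g (Fin.cons β γ' ∘ (0 : Fin (F₀+1)).succAbove))
      = n • g γ' + (L' - 1) • g γ' := by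
  have hc : ∀ β : Fin n, Fin.cons β γ' ∘ (0 : Fin (F₀+1)).succAbove = γ' := by
    intro β; funext i; simp [Fin.succAbove_zero]
  simp only [hc, Fin.cons_zero, pderiv_mul, pderiv_X_self, one_mul]
  rw [Finset.sum_add_distrib, euler n (L'-1) _ (hgh' γ'), Finset.sum_const,
    Finset.card_univ, Fintype.card_fin]

lemma succ_term (n m : ℕ)
    (g : (Fin (m+1) → Fin n) → MvPolynomial (Fin n ⊕ Fin n) ℂ)
    (hga : AntisymFam n (m+1) g) (hgt : TraceFreeFam n (m+1) g)
    (γ' : Fin (m+1) → Fin n) (j : Fin (m+1)) :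
    ∑ β : Fin n, pderiv (Sum.inr β)
        ((X (Sum.inr ((Fin.cons β γ' : Fin (m+1+1) → Fin n) j.succ)) : MvPolynomial (Fin n ⊕ Fin n) ℂ) *
          g (Fin.cons β γ' ∘ (j.succ).succAbove))
      = ((-1:ℤ)^(j:ℕ)) • g γ' := by
  simp only [Fin.cons_succ, key_tuple, pderiv_mul]
  rw [Finset.sum_add_distrib]
  have h2 : ∑ β : Fin n, X (Sum.inr (γ' j)) *
      pderiv (Sum.inr β) (g (Function.update (γ' ∘ ⇑j.cycleRange.symm) 0 β)) = 0 := by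
    rw [← Finset.mul_sum, hgt (γ' ∘ ⇑j.cycleRange.symm) 0, mul_zero]
  rw [h2, add_zero]
  have h1 : ∀ β : Fin n, pderiv (Sum.inr β) (X (Sum.inr (γ' j)) : MvPolynomial _ ℂ) *
      g (Function.update (γ' ∘ ⇑j.cycleRange.symm) 0 β)
      = if β = γ' j then g (Function.update (γ' ∘ ⇑j.cycleRange.symm) 0 β) else 0 := by
    intro β
    by_cases h : β = γ' j
    · rw [if_pos h, h, pderiv_X_self, one_mul]
    · rw [if_neg h, pderiv_X_of_ne (fun hh => h (Sum.inr_injective hh).symm), zero_mul]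
  simp only [h1]
  rw [Finset.sum_ite_eq' Finset.univ (γ' j)
    (fun β => g (Function.update (γ' ∘ ⇑j.cycleRange.symm) 0 β)),
    if_pos (Finset.mem_univ _)]
  have hupd : Function.update (γ' ∘ ⇑j.cycleRange.symm) 0 (γ' j) = γ' ∘ ⇑j.cycleRange.symm := by
    have h0 : γ' j = (γ' ∘ ⇑j.cycleRange.symm) 0 := by
      simp [Fin.cycleRange_symm_zero]
    rw [h0, Function.update_eq_self]
  rw [hupd]
  have hco : γ' ∘ ⇑j.cycleRange.symm = γ' ∘ ⇑(j.cycleRange⁻¹) := rfl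
  rw [hco, hga j.cycleRange⁻¹ γ', map_inv, Fin.sign_cycleRange]
  simp

lemma final_scalar (n m L' : ℕ) (hL' : 1 ≤ L') (q : MvPolynomial (Fin n ⊕ Fin n) ℂ) :
    (n • q + (L' - 1) • q) + m • (-q) = C ((n:ℂ) + (L':ℂ) - ((m:ℂ) + 1)) * q := by
  rw [C_mul', ← Nat.cast_smul_eq_nsmul ℂ n, ← Nat.cast_smul_eq_nsmul ℂ (L'-1),
    ← Nat.cast_smul_eq_nsmul ℂ m, Nat.cast_sub hL', smul_neg, ← add_smul,
    ← sub_eq_add_neg, ← sub_smul]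
  congr 1
  push_cast
  ring

/-- Appendix B of the paper: if `g` is a totally antisymmetric trace-free family of
bidegree `(L, L'−1)` indexed by `(F−1)`-tuples, then `h = v ∧ g` is totally
antisymmetric of bidegree `(L, L')` and its trace is `(n + L' − F)·g`.
Here `F = F₀ + 1 ≥ 1`. -/
theorem stmt13 (n F₀ L L' : ℕ) (hn : 1 ≤ n) (hL' : 1 ≤ L')
    (g : (Fin F₀ → Fin n) → MvPolynomial (Fin n ⊕ Fin n) ℂ)
    (hga : AntisymFam n F₀ g)
    (hgh : ∀ γ, (g γ).IsWeightedHomogeneous (wWt n) L ∧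
                (g γ).IsWeightedHomogeneous (vWt n) (L' - 1))
    (hgt : TraceFreeFam n F₀ g) :
    AntisymFam n (F₀ + 1) (vWedge n F₀ g)
    ∧ (∀ γ, ((vWedge n F₀ g) γ).IsWeightedHomogeneous (wWt n) L ∧
            ((vWedge n F₀ g) γ).IsWeightedHomogeneous (vWt n) L')
    ∧ ∀ γ' : Fin F₀ → Fin n,
        ∑ β : Fin n, pderiv (Sum.inr β) (vWedge n F₀ g (Fin.cons β γ'))
          = MvPolynomial.C ((n : ℂ) + (L' : ℂ) - ((F₀ : ℂ) + 1)) * g γ' := by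
  refine ⟨?_, ?_, ?_⟩
  · -- antisymmetry
    intro σ γ
    have hσ : σ ∈ Submonoid.closure
        (Set.range fun i : Fin F₀ => Equiv.swap i.castSucc i.succ) := by
      rw [Equiv.Perm.mclosure_swap_castSucc_succ]; exact Submonoid.mem_top σ
    induction hσ using Submonoid.closure_induction generalizing γ with
    | mem x hx =>
      obtain ⟨i, rfl⟩ := hx
      rw [vWedge_swap n F₀ g hga i γ, Equiv.Perm.sign_swap (Fin.castSucc_lt_succ : i.castSucc < i.succ).ne]
      simp
    | one => simp
    | mul x y hx hy ihx ihy =>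
      have hco : γ ∘ ⇑(x * y) = (γ ∘ ⇑x) ∘ ⇑y := by
        rw [Equiv.Perm.coe_mul]; rfl
      rw [hco, ihy, ihx, smul_smul, map_mul, Units.val_mul, mul_comm]
  · -- homogeneity
    intro γ
    constructor
    · simp only [vWedge]
      apply IsWeightedHomogeneous.sum
      intro k _
      apply smul_homog
      have hx : (X (Sum.inr (γ k)) : MvPolynomial (Fin n ⊕ Fin n) ℂ).IsWeightedHomogeneous
          (wWt n) 0 := isWeightedHomogeneous_X ℂ (wWt n) (Sum.inr (γ k))
      simpa using hx.mul ((hgh (γ ∘ k.succAbove)).1)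
    · simp only [vWedge]
      apply IsWeightedHomogeneous.sum
      intro k _
      apply smul_homog
      have hx : (X (Sum.inr (γ k)) : MvPolynomial (Fin n ⊕ Fin n) ℂ).IsWeightedHomogeneous
          (vWt n) 1 := isWeightedHomogeneous_X ℂ (vWt n) (Sum.inr (γ k))
      have hm := hx.mul ((hgh (γ ∘ k.succAbove)).2)
      rwa [show 1 + (L' - 1) = L' by omega] at hm
  · -- trace
    intro γ'
    have expand : ∑ β : Fin n, pderiv (Sum.inr β) (vWedge n F₀ g (Fin.cons β γ'))
        = ∑ k : Fin (F₀+1), (-1:ℤ)^(k:ℕ) • ∑ β : Fin n, pderiv (Sum.inr β)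
            ((X (Sum.inr ((Fin.cons β γ' : Fin (F₀+1) → Fin n) k)) :
                MvPolynomial (Fin n ⊕ Fin n) ℂ) *
              g (Fin.cons β γ' ∘ k.succAbove)) := by
      simp only [vWedge, map_sum]
      rw [Finset.sum_comm]
      refine Finset.sum_congr rfl fun k _ => ?_
      rw [Finset.smul_sum]
      refine Finset.sum_congr rfl fun β _ => ?_
      rw [zsmul_poly, pderiv_C_mul, ← zsmul_poly]
    rw [expand, Fin.sum_univ_succ,
      zero_term n F₀ L' g (fun γ => (hgh γ).2) γ']
    simp only [Fin.val_zero, pow_zero, one_smul]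
    cases F₀ with
    | zero =>
      simp only [Finset.univ_eq_empty, Finset.sum_empty, add_zero]
      rw [C_mul', ← Nat.cast_smul_eq_nsmul ℂ n, ← Nat.cast_smul_eq_nsmul ℂ (L'-1),
        Nat.cast_sub hL', ← add_smul]
      congr 1
      push_cast
      ring
    | succ m =>
      have hj : ∀ j : Fin (m+1),
          (-1:ℤ)^(((j.succ : Fin (m+2))):ℕ) • ∑ β : Fin n, pderiv (Sum.inr β)
            ((X (Sum.inr ((Fin.cons β γ' : Fin (m+2) → Fin n) j.succ)) :
                MvPolynomial (Fin n ⊕ Fin n) ℂ) *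
              g (Fin.cons β γ' ∘ (j.succ).succAbove)) = - g γ' := by
        intro j
        rw [succ_term n m g hga hgt γ' j, smul_smul, Fin.val_succ, ← pow_add,
          Odd.neg_one_pow ⟨(j:ℕ), by ring⟩, neg_one_smul]
      rw [Finset.sum_congr rfl (fun j _ => hj j), Finset.sum_const, Finset.card_univ,
        Fintype.card_fin]
      exact final_scalar n (m+1) L' hL' (g γ')
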